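/- Let k be a non-square positive integer and d a positive rational number. Then 4d²/(k − d²) is an integer if and only if some iterate f^n(∞) (n ≥ 1) of f(x) = (dx+k)/(x+d) equals p/q with integers p, q satisfying p² − kq² = ±1. -/

import Mathlib

/-- The linear fractional transformation `f(x) = (dx + k)/(x + d)` acting on
the projective line `ℚℙ¹ = OnePoint ℚ`, with `f(∞) = d`. -/
noncomputable def lft (d k : ℚ) : OnePoint ℚ → OnePoint ℚ := fun x =>
  match x with
  | none => (d : OnePoint ℚ)
  | some x => if x + d = 0 then OnePoint.infty else ((d * x + k) / (x + d) : ℚ)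

/-- The point `a/b` of the projective line, with `a/0 = ∞`. -/
noncomputable def ratio (a b : ℚ) : OnePoint ℚ :=
  if b = 0 then OnePoint.infty else ((a / b : ℚ) : OnePoint ℚ)

lemma lft_some (d k x : ℚ) :
    lft d k (OnePoint.some x) = if x + d = 0 then OnePoint.infty else ((d * x + k) / (x + d) : ℚ) := rfl

namespace Stmt5Aux

/-! ### Integer sequences -/

/-- coefficients of `(s + t√k)^n = (AB n).1 + (AB n).2 √k`. -/
def AB (k s t : ℤ) : ℕ → ℤ × ℤ
  | 0 => (1, 0)
  | n+1 => (s * (AB k s t n).1 + k * t * (AB k s t n).2,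
            t * (AB k s t n).1 + s * (AB k s t n).2)

lemma AB_succ_fst (k s t : ℤ) (n : ℕ) :
    (AB k s t (n+1)).1 = s * (AB k s t n).1 + k * t * (AB k s t n).2 := rfl

lemma AB_succ_snd (k s t : ℤ) (n : ℕ) :
    (AB k s t (n+1)).2 = t * (AB k s t n).1 + s * (AB k s t n).2 := rfl

lemma AB_norm (k s t : ℤ) (n : ℕ) :
    (AB k s t n).1 ^ 2 - k * (AB k s t n).2 ^ 2 = (s ^ 2 - k * t ^ 2) ^ n := by
  induction n with
  | zero => simp [AB]
  | succ n ih =>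
    rw [AB_succ_fst, AB_succ_snd,
      show (s^2 - k*t^2)^(n+1) = (s^2-k*t^2)^n * (s^2-k*t^2) from pow_succ _ _, ← ih]
    ring

lemma AB_pos (k s t : ℤ) (hk : 0 < k) (hs : 0 < s) (ht : 0 < t) :
    ∀ n, 0 < (AB k s t n).1 ∧ 0 ≤ (AB k s t n).2 := by
  intro n
  induction n with
  | zero => simp [AB]
  | succ n ih =>
    rw [AB_succ_fst, AB_succ_snd]
    have h1 := mul_pos hs ih.1
    have h2 := mul_nonneg (mul_pos hk ht).le ih.2
    have h3 := mul_pos ht ih.1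
    have h4 := mul_nonneg hs.le ih.2
    constructor <;> linarith

lemma AB_snd_pos (k s t : ℤ) (hk : 0 < k) (hs : 0 < s) (ht : 0 < t) (n : ℕ) (hn : 1 ≤ n) :
    0 < (AB k s t n).2 := by
  obtain ⟨j, rfl⟩ : ∃ j, n = j + 1 := ⟨n - 1, by omega⟩
  rw [AB_succ_snd]
  have h3 := mul_pos ht (AB_pos k s t hk hs ht j).1
  have h4 := mul_nonneg hs.le (AB_pos k s t hk hs ht j).2
  linarith

/-- the u-sequence: `(s+t√k)^(j+1) = u(j+1) (s+t√k) + M u(j)` with `M = k t² - s²`. -/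
def useq (M s : ℤ) : ℕ → ℤ
  | 0 => 0
  | 1 => 1
  | j+2 => 2 * s * useq M s (j+1) + M * useq M s j

lemma AB_eq_useq (k s t : ℤ) (j : ℕ) :
    (AB k s t (j+1)).1 = s * useq (k*t^2 - s^2) s (j+1) + (k*t^2 - s^2) * useq (k*t^2 - s^2) s j ∧
    (AB k s t (j+1)).2 = t * useq (k*t^2 - s^2) s (j+1) := by
  induction j with
  | zero => constructor <;> simp [AB, useq]
  | succ j ih =>
    have h2 : useq (k*t^2-s^2) s (j+2) = 2*s*useq (k*t^2-s^2) s (j+1) + (k*t^2-s^2)*useq (k*t^2-s^2) s j := rfl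
    constructor
    · rw [AB_succ_fst, ih.1, ih.2, show j+1+1 = j+2 from rfl, h2]; ring
    · rw [AB_succ_snd, ih.1, ih.2, show j+1+1 = j+2 from rfl, h2]; ring

/-! ### Valuation arguments for the backward direction -/

lemma natdvd (m : ℕ) (z : ℤ) : (m:ℤ) ∣ z ↔ m ∣ z.natAbs :=
  (Int.dvd_natAbs).symm.trans Int.natCast_dvd_natCast

lemma powdvd (ℓ m : ℕ) (z : ℤ) : (ℓ:ℤ)^m ∣ z ↔ ℓ^m ∣ z.natAbs := by
  rw [← natdvd]; push_cast; rfl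

/-- exact divisibility by the factorization exponent -/
lemma exact_pow {ℓ : ℕ} (hp : ℓ.Prime) {z : ℤ} (hz : z ≠ 0) :
    (ℓ:ℤ)^(z.natAbs.factorization ℓ) ∣ z ∧ ¬ (ℓ:ℤ)^(z.natAbs.factorization ℓ + 1) ∣ z := by
  have hz' : z.natAbs ≠ 0 := Int.natAbs_ne_zero.mpr hz
  constructor
  · rw [powdvd]; exact (Nat.Prime.pow_dvd_iff_le_factorization hp hz').mpr le_rfl
  · rw [powdvd]
    intro h
    have := (Nat.Prime.pow_dvd_iff_le_factorization hp hz').mp h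
    omega

lemma exact_mul_not {ℓ : ℕ} (hp : ℓ.Prime) {a b : ℕ} {x y : ℤ}
    (hx : (ℓ:ℤ)^a ∣ x) (hx' : ¬ (ℓ:ℤ)^(a+1) ∣ x)
    (hy : (ℓ:ℤ)^b ∣ y) (hy' : ¬ (ℓ:ℤ)^(b+1) ∣ y) :
    ¬ (ℓ:ℤ)^(a+b+1) ∣ x * y := by
  have hL : Prime (ℓ : ℤ) := Nat.prime_iff_prime_int.mp hp
  obtain ⟨x', hx1⟩ := hx
  obtain ⟨y', hy1⟩ := hy
  have hxd : ¬ (ℓ:ℤ) ∣ x' := fun ⟨w, hw⟩ => hx' ⟨w, by rw [hx1, hw]; ring⟩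
  have hyd : ¬ (ℓ:ℤ) ∣ y' := fun ⟨w, hw⟩ => hy' ⟨w, by rw [hy1, hw]; ring⟩
  intro ⟨w, hw⟩
  have hne : ((ℓ:ℤ))^(a+b) ≠ 0 := pow_ne_zero _ hL.ne_zero
  have heq : (ℓ:ℤ)^(a+b) * (x'*y') = (ℓ:ℤ)^(a+b) * ((ℓ:ℤ)*w) := by
    calc (ℓ:ℤ)^(a+b)*(x'*y') = ((ℓ:ℤ)^a*x') * ((ℓ:ℤ)^b*y') := by ring
    _ = x * y := by rw [hx1, hy1]
    _ = (ℓ:ℤ)^(a+b+1)*w := hw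
    _ = (ℓ:ℤ)^(a+b)*((ℓ:ℤ)*w) := by ring
  have : x' * y' = (ℓ:ℤ) * w := mul_left_cancel₀ hne heq
  rcases (hL.dvd_mul.mp ⟨w, this⟩) with h | h
  · exact hxd h
  · exact hyd h

/-- Key valuation lemma: if `c² = ±M^n`, `c ∣ t·u(n)` (`n = n'+1 ≥ 1`), then `M ∣ 4s²`. -/
lemma M_dvd_four_sq (k s t M : ℤ) (hs : 0 < s) (ht : 0 < t)
    (hcop : Nat.Coprime s.natAbs t.natAbs) (hMdef : M = k * t^2 - s^2) (hM0 : M ≠ 0)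
    (n' : ℕ) (c : ℤ) (hc0 : c ≠ 0)
    (hcB : c ∣ t * useq M s (n'+1))
    (hc2 : c^2 = M^(n'+1) ∨ c^2 = -M^(n'+1)) :
    M ∣ 4 * s^2 := by
  have h4s0 : (4 * s^2 : ℤ) ≠ 0 := by positivity
  rw [← Int.natAbs_dvd_natAbs]
  rw [← Nat.factorization_le_iff_dvd (Int.natAbs_ne_zero.mpr hM0) (Int.natAbs_ne_zero.mpr h4s0)]
  rw [Finsupp.le_def]
  intro ℓ
  by_cases hp : ℓ.Prime
  swap
  · simp [Nat.factorization_eq_zero_of_not_prime _ hp]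
  have hL : Prime (ℓ : ℤ) := Nat.prime_iff_prime_int.mp hp
  by_cases hlt : (ℓ : ℤ) ∣ t
  · -- then ℓ ∤ M
    have hnd : ¬ (ℓ : ℤ) ∣ M := by
      intro hlM
      have hls : (ℓ:ℤ) ∣ s := by
        refine hL.dvd_of_dvd_pow (n := 2) ?_
        have h2 : (s:ℤ)^2 = k * t^2 - M := by rw [hMdef]; ring
        rw [h2]
        exact dvd_sub (((dvd_pow hlt two_ne_zero).mul_left k)) hlM
      have h1 : ℓ ∣ s.natAbs := (natdvd ℓ s).mp hls
      have h2 : ℓ ∣ t.natAbs := (natdvd ℓ t).mp hlt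
      have h3 := Nat.dvd_gcd h1 h2
      rw [hcop] at h3
      exact hp.one_lt.ne' (Nat.dvd_one.mp h3)
    have hnd' : ¬ ℓ ∣ M.natAbs := fun h => hnd ((natdvd ℓ M).mpr h)
    simp [Nat.factorization_eq_zero_of_not_dvd hnd']
  -- main case: ℓ ∤ t
  set α := (2*s).natAbs.factorization ℓ with hα
  set e := M.natAbs.factorization ℓ with he
  have h2s0 : (2*s : ℤ) ≠ 0 := by positivity
  have hgoal : (4*s^2 : ℤ).natAbs.factorization ℓ = 2 * α := by
    have h4 : (4*s^2 : ℤ) = (2*s)^2 := by ring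
    rw [h4, Int.natAbs_pow, Nat.factorization_pow]
    simp [hα]
  rw [hgoal]
  by_contra hcon
  push_neg at hcon
  have hecon : 2*α + 1 ≤ e := hcon
  have h2sd := exact_pow hp h2s0
  rw [← hα] at h2sd
  have hM1 : (ℓ:ℤ)^(2*α+1) ∣ M := by
    rw [powdvd]
    exact (Nat.Prime.pow_dvd_iff_le_factorization hp (Int.natAbs_ne_zero.mpr hM0)).mpr hecon
  -- exactness induction on useq
  have key : ∀ j : ℕ, ((ℓ:ℤ)^(j*α) ∣ useq M s (j+1) ∧ ¬ (ℓ:ℤ)^(j*α+1) ∣ useq M s (j+1)) ∧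
      (ℓ:ℤ)^(j*α+α+1) ∣ M * useq M s j := by
    intro j
    induction j with
    | zero =>
      refine ⟨⟨by simpa using one_dvd _, ?_⟩, by simp [useq]⟩
      show ¬ (ℓ:ℤ)^(0*α+1) ∣ useq M s 1
      intro h
      simp only [useq, Nat.zero_mul, zero_add, pow_one] at h
      exact hL.not_isUnit (isUnit_of_dvd_one h)
    | succ j ih =>
      have hu2 : useq M s (j+2) = 2*s*useq M s (j+1) + M * useq M s j := rfl
      have hd1 : (ℓ:ℤ)^((j+1)*α) ∣ 2*s*useq M s (j+1) := by
        have := mul_dvd_mul h2sd.1 ih.1.1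
        rw [← pow_add] at this
        rw [show (j+1)*α = α + j*α by ring]
        exact this
      have hd2 : (ℓ:ℤ)^((j+1)*α+1) ∣ M * useq M s j := by
        refine dvd_trans (pow_dvd_pow _ ?_) ih.2
        have : (j+1)*α = j*α + α := by ring
        omega
      refine ⟨⟨?_, ?_⟩, ?_⟩
      · rw [show j+1+1 = j+2 from rfl, hu2]
        exact dvd_add hd1 (dvd_trans (pow_dvd_pow _ (by omega)) hd2)
      · rw [show j+1+1 = j+2 from rfl, hu2]
        intro hdd
        have : (ℓ:ℤ)^((j+1)*α+1) ∣ 2*s*useq M s (j+1) := by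
          have h5 : 2*s*useq M s (j+1) = (2*s*useq M s (j+1) + M * useq M s j) - M * useq M s j := by ring
          rw [h5]
          exact dvd_sub hdd hd2
        have hnot := exact_mul_not hp h2sd.1 h2sd.2 ih.1.1 ih.1.2
        rw [show α + j*α + 1 = (j+1)*α+1 by ring] at hnot
        exact hnot this
      · have := mul_dvd_mul hM1 ih.1.1
        rw [← pow_add] at this
        refine dvd_trans (pow_dvd_pow _ ?_) this
        have h7 : (j+1)*α = j*α + α := by ring
        omega
  -- conclude
  have hcnat : c.natAbs^2 = M.natAbs^(n'+1) := by
    rcases hc2 with h | h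
    · have := congrArg Int.natAbs h
      rwa [Int.natAbs_pow, Int.natAbs_pow] at this
    · have := congrArg Int.natAbs h
      rwa [Int.natAbs_pow, Int.natAbs_neg, Int.natAbs_pow] at this
  set β := c.natAbs.factorization ℓ with hβ
  have h2β : 2*β = (n'+1)*e := by
    have := congrArg (fun x => x.factorization ℓ) hcnat
    simpa [Nat.factorization_pow, hβ, he] using this
  have hLβc : (ℓ:ℤ)^β ∣ c := by
    rw [powdvd]
    exact (Nat.Prime.pow_dvd_iff_le_factorization hp (Int.natAbs_ne_zero.mpr hc0)).mpr le_rfl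
  have hLβu : (ℓ:ℤ)^β ∣ useq M s (n'+1) :=
    Prime.pow_dvd_of_dvd_mul_left hL β hlt (hLβc.trans hcB)
  have hβle : β ≤ n'*α := by
    by_contra hb
    push_neg at hb
    exact (key n').1.2 (dvd_trans (pow_dvd_pow _ (by omega)) hLβu)
  have h6 : (n'+1)*(2*α+1) ≤ (n'+1)*e := Nat.mul_le_mul_left _ hecon
  nlinarith [h2β, hβle, h6]

/-! ### Periodicity argument for the forward direction -/

def xy (R : ℤ) : ℕ → ℤ × ℤ
  | 0 => (1, 0)
  | m+1 => (-(xy R m).2, (xy R m).1 + (R+2) * (xy R m).2)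

lemma AB_two_step (k s t : ℤ) (n : ℕ) :
    (AB k s t (n+2)).1 = (s^2+k*t^2) * (AB k s t n).1 + (2*k*s*t) * (AB k s t n).2 ∧
    (AB k s t (n+2)).2 = (2*s*t) * (AB k s t n).1 + (s^2+k*t^2) * (AB k s t n).2 := by
  constructor
  · rw [show n+2 = n+1+1 from rfl, AB_succ_fst, AB_succ_fst, AB_succ_snd]; ring
  · rw [show n+2 = n+1+1 from rfl, AB_succ_snd, AB_succ_fst, AB_succ_snd]; ring

lemma CL (k s t M R : ℤ) (hMdef : M = k*t^2 - s^2) (hMR : M * R = 4*s^2) (j : ℕ) :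
    (AB k s t (2*(j+1))).1 = M^j * (M * (xy R (j+1)).1 + (xy R (j+1)).2 * (s^2 + k*t^2)) ∧
    (AB k s t (2*(j+1))).2 = M^j * ((xy R (j+1)).2 * (2*s*t)) := by
  subst hMdef
  induction j with
  | zero =>
    constructor
    · show (AB k s t 2).1 = _
      rw [show (2:ℕ) = 0+1+1 from rfl, AB_succ_fst, AB_succ_fst, AB_succ_snd]
      show _ = _ * (_ * ( -(0:ℤ)) + (1 + (R+2)*0) * _)
      simp [AB]; ring
    · show (AB k s t 2).2 = _
      rw [show (2:ℕ) = 0+1+1 from rfl, AB_succ_snd, AB_succ_fst, AB_succ_snd]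
      show _ = _ * ((1 + (R+2)*0) * _)
      simp [AB]; ring
  | succ j ih =>
    have h2 : 2*(j+1+1) = 2*(j+1)+2 := by ring
    rw [h2]
    obtain ⟨e1, e2⟩ := AB_two_step k s t (2*(j+1))
    rw [e1, e2, ih.1, ih.2]
    have hx : (xy R (j+1+1)).1 = -(xy R (j+1)).2 := rfl
    have hy : (xy R (j+1+1)).2 = (xy R (j+1)).1 + (R+2) * (xy R (j+1)).2 := rfl
    rw [hx, hy]
    constructor
    · linear_combination (-((k*t^2-s^2)^j * (xy R (j+1)).2 * (s^2 + k*t^2))) * hMR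
    · linear_combination (-((k*t^2-s^2)^j * (xy R (j+1)).2 * (2*s*t))) * hMR

lemma exists_period (R : ℤ) (N : ℕ) (hN : N ≠ 0) :
    ∃ m : ℕ, 1 ≤ m ∧ (N:ℤ) ∣ (xy R m).2 := by
  haveI : NeZero N := ⟨hN⟩
  set G : ZMod N × ZMod N → ZMod N × ZMod N := fun p => (-p.2, p.1 + (R+2)*p.2) with hG
  have hGinj : Function.Injective G := by
    intro a b h
    rw [Prod.ext_iff] at h ⊢
    obtain ⟨h1, h2⟩ := h
    simp only [hG, neg_inj] at h1 h2
    refine ⟨?_, h1⟩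
    rw [h1] at h2
    exact add_right_cancel h2
  have hcast : ∀ m : ℕ, (((xy R m).1 : ZMod N), ((xy R m).2 : ZMod N)) = G^[m] (1, 0) := by
    intro m
    induction m with
    | zero => simp [xy]
    | succ m ih =>
      rw [Function.iterate_succ_apply', ← ih]
      show _ = (-(((xy R m).2 : ZMod N)), ((xy R m).1 : ZMod N) + ((R:ZMod N)+2)*((xy R m).2 : ZMod N))
      have e1 : (xy R (m+1)).1 = -(xy R m).2 := rfl
      have e2 : (xy R (m+1)).2 = (xy R m).1 + (R+2) * (xy R m).2 := rfl
      rw [e1, e2]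
      push_cast
      rfl
  obtain ⟨a, b, hab, heq⟩ := Finite.exists_ne_map_eq_of_infinite (fun m : ℕ => G^[m] ((1:ZMod N), (0:ZMod N)))
  wlog hlt : a < b generalizing a b
  · exact this b a hab.symm heq.symm (by omega)
  have hba : b = a + (b - a) := by omega
  have : G^[a] (G^[b-a] (1,0)) = G^[a] (1,0) := by
    rw [← Function.iterate_add_apply, ← hba]
    exact heq.symm
  have hfix : G^[b-a] ((1:ZMod N), (0:ZMod N)) = (1, 0) := hGinj.iterate a this
  refine ⟨b - a, by omega, ?_⟩
  rw [← ZMod.intCast_zmod_eq_zero_iff_dvd]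
  have := hcast (b-a)
  rw [hfix] at this
  exact (Prod.ext_iff.mp this).2

/-! ### Bridge to the projective line -/

lemma step_eq (dq kq AQ BQ sQ tQ : ℚ) (hd : dq = sQ/tQ) (hA : 0 < AQ) (hB : 0 < BQ)
    (hs : 0 < sQ) (ht : 0 < tQ) (hk : 0 ≤ kq) :
    (dq * (AQ/BQ) + kq) / (AQ/BQ + dq) = (sQ*AQ + kq*tQ*BQ)/(tQ*AQ + sQ*BQ) := by
  subst hd
  have h1 : BQ ≠ 0 := ne_of_gt hB
  have h2 : tQ ≠ 0 := ne_of_gt ht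
  have h3 : AQ/BQ + sQ/tQ ≠ 0 := by positivity
  have h4 : tQ*AQ + sQ*BQ ≠ 0 := by positivity
  field_simp

lemma lft_iter (k : ℕ) (hk : 0 < k) (d : ℚ) (hd : 0 < d) (n : ℕ) :
    (lft d k)^[n] OnePoint.infty
      = ratio ((AB (k:ℤ) d.num (d.den:ℤ) n).1 : ℚ) ((AB (k:ℤ) d.num (d.den:ℤ) n).2 : ℚ) := by
  have hk' : (0:ℤ) < (k:ℤ) := by exact_mod_cast hk
  have hs : 0 < d.num := Rat.num_pos.mpr hd
  have ht : (0:ℤ) < (d.den:ℤ) := by exact_mod_cast d.pos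
  have hdst : d = (d.num : ℚ) / ((d.den:ℤ) : ℚ) := by
    push_cast
    exact (Rat.num_div_den d).symm
  induction n with
  | zero =>
    simp [ratio, AB]
  | succ n ih =>
    rw [Function.iterate_succ_apply', ih]
    rcases Nat.eq_zero_or_pos n with rfl | hn
    · -- lft applied to infinity
      have h0 : ratio ((AB (k:ℤ) d.num (d.den:ℤ) 0).1 : ℚ) ((AB (k:ℤ) d.num (d.den:ℤ) 0).2 : ℚ)
          = OnePoint.infty := by simp [ratio, AB]
      rw [h0]
      show (d : OnePoint ℚ) = _
      rw [AB_succ_fst, AB_succ_snd]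
      simp only [AB]
      have hden : ((d.den:ℤ):ℚ) ≠ 0 := by positivity
      rw [ratio, if_neg (by push_cast; positivity)]
      congr 1
      push_cast
      rw [mul_one, mul_zero, mul_zero, add_zero, mul_one, add_zero]
      exact ((Rat.num_div_den d).symm)
    · -- main step
      set A := (AB (k:ℤ) d.num (d.den:ℤ) n).1 with hA
      set B := (AB (k:ℤ) d.num (d.den:ℤ) n).2 with hB
      have hApos : 0 < A := (AB_pos _ _ _ hk' hs ht n).1
      have hBpos : 0 < B := AB_snd_pos _ _ _ hk' hs ht n hn
      have hBQ : ((B:ℚ)) ≠ 0 := by positivity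
      have hx : (0:ℚ) < (A:ℚ)/(B:ℚ) := by positivity
      rw [ratio, if_neg hBQ]
      show lft d k (OnePoint.some ((A:ℚ)/(B:ℚ))) = _
      rw [lft_some]
      rw [if_neg (by positivity)]
      rw [AB_succ_fst, AB_succ_snd, ← hA, ← hB]
      have hB'pos : (0:ℤ) < (d.den:ℤ) * A + d.num * B := by positivity
      rw [ratio, if_neg (by push_cast; positivity)]
      show OnePoint.some _ = OnePoint.some _
      congr 1
      push_cast
      refine step_eq d (k:ℚ) (A:ℚ) (B:ℚ) (d.num:ℚ) (d.den:ℚ) ?_ (by positivity) (by positivity)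
        (by exact_mod_cast hs) (by exact_mod_cast ht) (by positivity)
      exact_mod_cast (Rat.num_div_den d).symm

lemma ratio_eq_of (a b a' b' : ℤ) (hb : 0 < b) (hb' : 0 < b') (h : a * b' = b * a') :
    ratio (a:ℚ) (b:ℚ) = ratio (a':ℚ) (b':ℚ) := by
  have h1 : ((b:ℚ)) ≠ 0 := by positivity
  have h2 : ((b':ℚ)) ≠ 0 := by positivity
  rw [ratio, ratio, if_neg h1, if_neg h2]
  congr 1
  rw [div_eq_div_iff h1 h2]
  exact_mod_cast h.trans (mul_comm b a')

end Stmt5Aux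

/-- For `k` a non-square positive integer and `d` a positive rational,
`4d²/(k − d²)` is an integer if and only if some iterate `f^n(∞)` (`n ≥ 1`) of
`f(x) = (dx+k)/(x+d)` equals `p/q` with integers `p, q` satisfying `p² − kq² = ±1`. -/
theorem stmt5 (k : ℕ) (hk : 0 < k) (hknsq : ¬ IsSquare k) (d : ℚ) (hd : 0 < d) :
    (∃ R : ℤ, (R : ℚ) = 4 * d ^ 2 / ((k : ℚ) - d ^ 2)) ↔
    ∃ n : ℕ, 1 ≤ n ∧ ∃ p q : ℤ, 0 < p ∧ 0 < q ∧
      (p ^ 2 - (k : ℤ) * q ^ 2 = 1 ∨ p ^ 2 - (k : ℤ) * q ^ 2 = -1) ∧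
      (lft d (k : ℚ))^[n] OnePoint.infty = ratio (p : ℚ) (q : ℚ) := by
  have hiter := Stmt5Aux.lft_iter k hk d hd
  have hk' : (0:ℤ) < (k:ℤ) := by exact_mod_cast hk
  set s := d.num with hsdef
  set t := ((d.den : ℕ) : ℤ) with htdef
  have hs : 0 < s := Rat.num_pos.mpr hd
  have ht : (0:ℤ) < t := by rw [htdef]; exact_mod_cast d.pos
  have hcop : Nat.Coprime s.natAbs t.natAbs := by
    have := d.reduced
    simpa [hsdef, htdef] using this
  set M := (k:ℤ)*t^2 - s^2 with hMdef
  have hM0 : M ≠ 0 := by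
    intro h0
    have hkt : (k:ℤ) * t^2 = s^2 := by rw [hMdef] at h0; linarith
    have hnat : k * d.den^2 = s.natAbs^2 := by
      have := congrArg Int.natAbs hkt
      rwa [Int.natAbs_mul, Int.natAbs_pow, Int.natAbs_pow, htdef, Int.natAbs_natCast,
        Int.natAbs_natCast] at this
    have hdvd : d.den^2 ∣ s.natAbs^2 := ⟨k, by rw [← hnat]; ring⟩
    have hcop2 : Nat.Coprime (d.den^2) (s.natAbs^2) :=
      Nat.Coprime.pow 2 2 (by simpa [htdef] using hcop.symm)
    have hden1 : d.den^2 = 1 := hcop2.eq_one_of_dvd hdvd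
    rw [hden1, mul_one] at hnat
    apply hknsq
    exact ⟨s.natAbs, by rw [← pow_two]; exact hnat⟩
  have hdst : d = (s : ℚ) / (t : ℚ) := by
    rw [hsdef, htdef]; push_cast; exact_mod_cast (Rat.num_div_den d).symm
  have htQ : ((t:ℤ):ℚ) ≠ 0 := by
    have : (0:ℚ) < ((t:ℤ):ℚ) := by exact_mod_cast ht
    positivity
  have hdt : d * ((t:ℤ):ℚ) = ((s:ℤ):ℚ) := by
    rw [hdst]; field_simp
  have h1 : ((k:ℚ) - d^2) * ((t:ℤ):ℚ)^2 = ((M:ℤ):ℚ) := by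
    have : ((M:ℤ):ℚ) = (k:ℚ)*((t:ℤ):ℚ)^2 - ((s:ℤ):ℚ)^2 := by rw [hMdef]; push_cast; ring
    rw [this, ← hdt]; ring
  have h2 : (k:ℚ) - d^2 ≠ 0 := by
    intro h0
    apply hM0
    have : ((M:ℤ):ℚ) = 0 := by rw [← h1, h0]; ring
    exact_mod_cast this
  constructor
  · -- integrality implies Pell solution
    rintro ⟨R, hR⟩
    have hMR : M * R = 4 * s^2 := by
      have h8 : ((k:ℚ) - d^2) * (R:ℚ) = 4*d^2 := by
        rw [hR, mul_div_cancel₀ _ h2]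
      have hQ : ((M:ℤ):ℚ) * R = 4 * ((s:ℤ):ℚ)^2 := by
        calc ((M:ℤ):ℚ)*R = (((k:ℚ)-d^2)*((t:ℤ):ℚ)^2)*R := by rw [h1]
        _ = (((k:ℚ)-d^2)*R)*((t:ℤ):ℚ)^2 := by ring
        _ = (4*d^2)*((t:ℤ):ℚ)^2 := by rw [h8]
        _ = 4*(d*((t:ℤ):ℚ))^2 := by ring
        _ = 4*((s:ℤ):ℚ)^2 := by rw [hdt]
      exact_mod_cast hQ
    obtain ⟨m, hm1, hmdvd⟩ := Stmt5Aux.exists_period R M.natAbs (Int.natAbs_ne_zero.mpr hM0)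
    have hMdvd : M ∣ (Stmt5Aux.xy R m).2 := by
      rw [← Int.natAbs_dvd]; exact hmdvd
    obtain ⟨z, hz⟩ := hMdvd
    obtain ⟨j, rfl⟩ : ∃ j, m = j + 1 := ⟨m - 1, by omega⟩
    obtain ⟨hA2, hB2⟩ := Stmt5Aux.CL (k:ℤ) s t M R hMdef hMR j
    set P := (Stmt5Aux.xy R (j+1)).1 + z * (s^2 + (k:ℤ)*t^2) with hP
    set Q := z * (2*s*t) with hQdef
    have hA3 : (Stmt5Aux.AB (k:ℤ) s t (2*(j+1))).1 = M^(j+1) * P := by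
      rw [hA2, hz, hP]; ring
    have hB3 : (Stmt5Aux.AB (k:ℤ) s t (2*(j+1))).2 = M^(j+1) * Q := by
      rw [hB2, hz, hQdef]; ring
    have hMpow0 : M^(j+1) ≠ 0 := pow_ne_zero _ hM0
    have hnorm := Stmt5Aux.AB_norm (k:ℤ) s t (2*(j+1))
    have hexp : (s^2 - (k:ℤ)*t^2)^(2*(j+1)) = (M^(j+1))^2 := by
      have e1 : (s^2 - (k:ℤ)*t^2)^2 = M^2 := by rw [hMdef]; ring
      calc (s^2-(k:ℤ)*t^2)^(2*(j+1)) = ((s^2-(k:ℤ)*t^2)^2)^(j+1) := by rw [← pow_mul]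
      _ = (M^2)^(j+1) := by rw [e1]
      _ = (M^(j+1))^2 := by rw [← pow_mul, show (2:ℕ)*(j+1) = (j+1)*2 from mul_comm _ _, pow_mul]
    have hPell : P^2 - (k:ℤ)*Q^2 = 1 := by
      have h5 : (M^(j+1))^2 * (P^2 - (k:ℤ)*Q^2) = (M^(j+1))^2 * 1 := by
        rw [hA3, hB3, hexp] at hnorm
        linear_combination hnorm
      exact mul_left_cancel₀ (pow_ne_zero 2 hMpow0) h5
    have hApos : 0 < (Stmt5Aux.AB (k:ℤ) s t (2*(j+1))).1 :=
      (Stmt5Aux.AB_pos _ _ _ hk' hs ht _).1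
    have hBpos : 0 < (Stmt5Aux.AB (k:ℤ) s t (2*(j+1))).2 :=
      Stmt5Aux.AB_snd_pos _ _ _ hk' hs ht _ (by omega)
    have hApos' : 0 < M^(j+1) * P := by rw [← hA3]; exact hApos
    have hBpos' : 0 < M^(j+1) * Q := by rw [← hB3]; exact hBpos
    rcases mul_pos_iff.mp hApos' with ⟨hc1, hp1⟩ | ⟨hc1, hp1⟩
    · -- M^(j+1) > 0, P > 0
      have hq1 : 0 < Q := by
        rcases mul_pos_iff.mp hBpos' with ⟨_, h⟩ | ⟨h, _⟩
        · exact h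
        · exact absurd hc1 (not_lt.mpr h.le)
      refine ⟨2*(j+1), by omega, P, Q, hp1, hq1, Or.inl hPell, ?_⟩
      rw [hiter (2*(j+1))]
      exact Stmt5Aux.ratio_eq_of _ _ _ _ hBpos hq1 (by rw [hA3, hB3]; ring)
    · -- M^(j+1) < 0, P < 0
      have hq1 : Q < 0 := by
        rcases mul_pos_iff.mp hBpos' with ⟨h, _⟩ | ⟨_, h⟩
        · exact absurd h (not_lt.mpr hc1.le)
        · exact h
      refine ⟨2*(j+1), by omega, -P, -Q, by omega, by omega,
        Or.inl (by linear_combination hPell), ?_⟩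
      rw [hiter (2*(j+1))]
      exact Stmt5Aux.ratio_eq_of _ _ _ _ hBpos (by omega) (by rw [hA3, hB3]; ring)
  · -- Pell solution implies integrality
    rintro ⟨n, hn1, p, q, hp, hq, hpell, hit⟩
    rw [hiter n] at hit
    set A := (Stmt5Aux.AB (k:ℤ) s t n).1 with hAdef
    set B := (Stmt5Aux.AB (k:ℤ) s t n).2 with hBdef
    have hApos : 0 < A := (Stmt5Aux.AB_pos _ _ _ hk' hs ht n).1
    have hBpos : 0 < B := Stmt5Aux.AB_snd_pos _ _ _ hk' hs ht n hn1
    have hBQ : ((B:ℚ)) ≠ 0 := by positivity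
    have hqQ : ((q:ℚ)) ≠ 0 := by positivity
    rw [ratio, ratio, if_neg hBQ, if_neg hqQ] at hit
    have hfrac : (A:ℚ)/(B:ℚ) = (p:ℚ)/(q:ℚ) := OnePoint.coe_eq_coe.mp hit
    have hcross : A * q = p * B := by
      rw [div_eq_div_iff hBQ hqQ] at hfrac
      exact_mod_cast hfrac
    have hco : IsCoprime (q:ℤ) (p:ℤ) := by
      rcases hpell with h | h
      · exact ⟨-(k:ℤ)*q, p, by linear_combination h⟩
      · exact ⟨(k:ℤ)*q, -p, by linear_combination -h⟩
    obtain ⟨c, hc⟩ : q ∣ B := hco.dvd_of_dvd_mul_right ⟨A, by linear_combination -hcross⟩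
    have hc0 : c ≠ 0 := by
      intro rfl0
      rw [rfl0, mul_zero] at hc
      omega
    have hAc : A = c * p := by
      have h7 : A * q = (c * p) * q := by rw [hcross, hc]; ring
      exact mul_right_cancel₀ (by positivity) h7
    have hnorm := Stmt5Aux.AB_norm (k:ℤ) s t n
    rw [← hAdef, ← hBdef, hAc, hc] at hnorm
    have hsk : s^2 - (k:ℤ)*t^2 = -M := by rw [hMdef]; ring
    rw [hsk] at hnorm
    have hc2 : c^2 = M^n ∨ c^2 = -M^n := by
      rcases Nat.even_or_odd n with hev | hod
      · rw [hev.neg_pow] at hnorm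
        rcases hpell with h | h
        · left; linear_combination hnorm - c^2 * h
        · right; linear_combination c^2 * h - hnorm
      · rw [hod.neg_pow] at hnorm
        rcases hpell with h | h
        · right; linear_combination hnorm - c^2 * h
        · left; linear_combination c^2 * h - hnorm
    obtain ⟨n', rfl⟩ : ∃ n', n = n' + 1 := ⟨n - 1, by omega⟩
    have hBu : B = t * Stmt5Aux.useq M s (n'+1) := by
      have := (Stmt5Aux.AB_eq_useq (k:ℤ) s t n').2
      rw [← hMdef] at this
      rw [hBdef, this]
    have hcB : c ∣ t * Stmt5Aux.useq M s (n'+1) := by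
      rw [← hBu]
      exact ⟨q, by rw [hc]; ring⟩
    have hMdvd := Stmt5Aux.M_dvd_four_sq (k:ℤ) s t M hs ht hcop hMdef hM0 n' c hc0 hcB hc2
    obtain ⟨w, hw⟩ := hMdvd
    refine ⟨w, ?_⟩
    rw [eq_div_iff h2]
    have hQ : 4 * ((s:ℤ):ℚ)^2 = ((M:ℤ):ℚ) * w := by exact_mod_cast hw
    have ht2 : ((t:ℤ):ℚ)^2 ≠ 0 := pow_ne_zero _ htQ
    apply mul_right_cancel₀ ht2
    calc (w:ℚ) * ((k:ℚ) - d^2) * ((t:ℤ):ℚ)^2 = ((M:ℤ):ℚ) * w := by rw [mul_assoc, h1]; ring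
    _ = 4 * ((s:ℤ):ℚ)^2 := hQ.symm
    _ = 4 * d^2 * ((t:ℤ):ℚ)^2 := by rw [← hdt]; ring
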